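/- The quantum W1 norm is non-increasing under quantum channels acting on a single qudit and invariant under permutations of the qudits: for any i ∈ [n], any quantum channel (completely positive trace-preserving map) Φ_i on the i-th qudit, and any X ∈ O_n^T, one has ‖(Φ_i ⊗ id)(X)‖_{W1} ≤ ‖X‖_{W1}, with equality when Φ_i is a unitary conjugation; and for any permutation π of [n], the operator X^π obtained by permuting the tensor factors of X according to π satisfies ‖X^π‖_{W1} = ‖X‖_{W1}. -/

import Mathlib

open scoped BigOperators
open scoped Classical
open scoped ComplexOrder

noncomputable section

namespace QW1

/-- Configurations of `n` qudits of local dimension `d`: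
the index set of the canonical basis of `(ℂ^d)^{⊗ n}`. -/
abbrev Cfg (d n : ℕ) : Type := Fin n → Fin d

/-- Linear operators on the Hilbert space of `n` qudits, represented as matrices
in the canonical basis. -/
abbrev Mat (d n : ℕ) : Type := Matrix (Cfg d n) (Cfg d n) ℂ

/-- The trace norm `‖A‖₁ = Tr √(Aᴴ A)`. -/
noncomputable def traceNorm {ι : Type} [Fintype ι] [DecidableEq ι] (A : Matrix ι ι ℂ) : ℝ :=
  (((Matrix.posSemidef_conjTranspose_mul_self A).1.eigenvectorUnitary : Matrix ι ι ℂ) *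
    Matrix.diagonal ((fun x : ℝ => (x : ℂ)) ∘ Real.sqrt ∘ (Matrix.posSemidef_conjTranspose_mul_self A).1.eigenvalues) *
    (star ((Matrix.posSemidef_conjTranspose_mul_self A).1.eigenvectorUnitary : Matrix ι ι ℂ))).trace.re

/-- The operator norm `‖A‖_∞`. -/
noncomputable def opNorm {ι : Type} [Fintype ι] [DecidableEq ι] (A : Matrix ι ι ℂ) : ℝ :=
  ‖Matrix.toEuclideanCLM (𝕜 := ℂ) A‖

/-- Quantum states: positive semidefinite operators with unit trace. -/
def IsState {ι : Type} [Fintype ι] (ρ : Matrix ι ι ℂ) : Prop :=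
  ρ.PosSemidef ∧ ρ.trace = 1

/-- Insert the value `s` at position `i` into a configuration `a` of the remaining qudits. -/
def ins {d n : ℕ} (i : Fin n) (a : {j : Fin n // j ≠ i} → Fin d) (s : Fin d) : Cfg d n :=
  fun j => if h : j = i then s else a ⟨j, h⟩

/-- The partial trace over the `i`-th qudit. -/
noncomputable def ptrace {d n : ℕ} (i : Fin n) (X : Mat d n) :
    Matrix ({j : Fin n // j ≠ i} → Fin d) ({j : Fin n // j ≠ i} → Fin d) ℂ :=
  fun a b => ∑ s : Fin d, X (ins i a s) (ins i b s)

/-- The marginal of `ρ` on the `i`-th qudit (partial trace over all the other qudits). -/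
noncomputable def marginal {d n : ℕ} (i : Fin n) (ρ : Mat d n) :
    Matrix (Fin d) (Fin d) ℂ :=
  fun s t => ∑ a : ({j : Fin n // j ≠ i} → Fin d), ρ (ins i a s) (ins i a t)

/-- Combine a configuration `s` of the qudits in `I` with a configuration `a` of the rest. -/
def insSet {d n : ℕ} (I : Finset (Fin n)) (a : {j : Fin n // j ∉ I} → Fin d)
    (s : {j : Fin n // j ∈ I} → Fin d) : Cfg d n :=
  fun j => if h : j ∈ I then s ⟨j, h⟩ else a ⟨j, h⟩

/-- The partial trace over the qudits in `I`. -/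
noncomputable def ptraceSet {d n : ℕ} (I : Finset (Fin n)) (X : Mat d n) :
    Matrix ({j : Fin n // j ∉ I} → Fin d) ({j : Fin n // j ∉ I} → Fin d) ℂ :=
  fun a b => ∑ s : ({j : Fin n // j ∈ I} → Fin d), X (insSet I a s) (insSet I b s)

/-- The set of values `(1/2) ∑ i ‖X⁽ⁱ⁾‖₁` over all decompositions `X = ∑ i X⁽ⁱ⁾` with
`X⁽ⁱ⁾` self-adjoint and `Tr_i X⁽ⁱ⁾ = 0`. -/
def W1Set {d n : ℕ} (X : Mat d n) : Set ℝ :=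
  { r | ∃ Y : Fin n → Mat d n, (∀ i, (Y i).IsHermitian) ∧ (∀ i, ptrace i (Y i) = 0) ∧
      X = ∑ i, Y i ∧ r = (1 / 2) * ∑ i, traceNorm (Y i) }

/-- The quantum `W₁` norm. -/
noncomputable def W1 {d n : ℕ} (X : Mat d n) : ℝ := sInf (W1Set X)

/-- The quantum Lipschitz constant: the dual norm of the quantum `W₁` norm. -/
noncomputable def lipschitz {d n : ℕ} (H : Mat d n) : ℝ :=
  sSup { r | ∃ X : Mat d n, X.IsHermitian ∧ X.trace = 0 ∧ W1 X ≤ 1 ∧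
    r = ((H * X).trace).re }

/-- Extension `Φ ⊗ id_R` of a map on matrices. -/
def extendMap {A B R : Type} [Fintype A] [Fintype B] [Fintype R]
    (Φ : Matrix A A ℂ → Matrix B B ℂ) (M : Matrix (A × R) (A × R) ℂ) :
    Matrix (B × R) (B × R) ℂ :=
  fun p q => Φ (fun a a' => M (a, p.2) (a', q.2)) p.1 q.1

/-- Quantum channels: completely positive trace-preserving linear maps. -/
def IsCPTP {A B : Type} [Fintype A] [Fintype B]
    (Φ : Matrix A A ℂ →ₗ[ℂ] Matrix B B ℂ) : Prop :=
  (∀ (k : ℕ) (M : Matrix (A × Fin k) (A × Fin k) ℂ), M.PosSemidef →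
    (extendMap (fun N => Φ N) M).PosSemidef) ∧
  ∀ M, (Φ M).trace = M.trace

/-- Action `φ_i ⊗ id` of a single-qudit map `φ` on the `i`-th qudit of `n` qudits. -/
def applyAt {d n : ℕ} (i : Fin n) (φ : Matrix (Fin d) (Fin d) ℂ → Matrix (Fin d) (Fin d) ℂ)
    (X : Mat d n) : Mat d n :=
  fun a b => φ (fun s t => X (Function.update a i s) (Function.update b i t)) (a i) (b i)

/-- Action `φ_I ⊗ id` of a map `φ` on the qudits in `I`. -/
def applyOn {d n : ℕ} (I : Finset (Fin n))
    (φ : Matrix ({j : Fin n // j ∈ I} → Fin d) ({j : Fin n // j ∈ I} → Fin d) ℂ →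
         Matrix ({j : Fin n // j ∈ I} → Fin d) ({j : Fin n // j ∈ I} → Fin d) ℂ)
    (X : Mat d n) : Mat d n :=
  fun a b =>
    φ (fun s t => X (insSet I (fun j => a j) s) (insSet I (fun j => b j) t))
      (fun j => a j) (fun j => b j)

/-- The operator obtained from `X` by permuting the tensor factors according to `π`. -/
def permuteMat {d n : ℕ} (π : Equiv.Perm (Fin n)) (X : Mat d n) : Mat d n :=
  fun a b => X (a ∘ π) (b ∘ π)

/-- Tensor product of an operator on the first `m` qudits with one on the last `n` qudits. -/
def tensorMN {d m n : ℕ} (A : Mat d m) (B : Mat d n) : Mat d (m + n) :=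
  fun a b =>
    A (fun i => a (Fin.castAdd n i)) (fun i => b (Fin.castAdd n i)) *
    B (fun j => a (Fin.natAdd m j)) (fun j => b (Fin.natAdd m j))

/-- Partial trace of an operator on `m + n` qudits over the last `n` qudits. -/
noncomputable def ptraceLast {d m n : ℕ} (X : Mat d (m + n)) : Mat d m :=
  fun a b => ∑ k : Cfg d n, X (Fin.append a k) (Fin.append b k)

/-- Partial trace of an operator on `m + n` qudits over the first `m` qudits. -/
noncomputable def ptraceFirst {d m n : ℕ} (X : Mat d (m + n)) : Mat d n :=
  fun a b => ∑ k : Cfg d m, X (Fin.append k a) (Fin.append k b)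

/-- `n`-fold tensor product `σ₁ ⊗ ⋯ ⊗ σₙ` of single-qudit operators. -/
def tensorAll {d n : ℕ} (σs : Fin n → Matrix (Fin d) (Fin d) ℂ) : Mat d n :=
  fun a b => ∏ i, σs i (a i) (b i)

/-- `I_d^{(i)} ⊗ K`: the identity on the `i`-th qudit tensored with an operator `K`
on the remaining qudits. -/
def idTensorAt {d n : ℕ} (i : Fin n)
    (K : Matrix ({j : Fin n // j ≠ i} → Fin d) ({j : Fin n // j ≠ i} → Fin d) ℂ) :
    Mat d n :=
  fun a b => if a i = b i then K (fun j => a j) (fun j => b j) else 0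

/-- `K ⊗ identity`: an operator acting only on the qudits in `I`. -/
def embedOn {d n : ℕ} (I : Finset (Fin n))
    (K : Matrix ({j : Fin n // j ∈ I} → Fin d) ({j : Fin n // j ∈ I} → Fin d) ℂ) :
    Mat d n :=
  fun a b => if (∀ j, j ∉ I → a j = b j) then K (fun j => a j) (fun j => b j) else 0

/-- The `n`-th tensor power `φ^{⊗n}` of a single-qudit linear map `φ`. -/
noncomputable def tensorPowMap {d n : ℕ}
    (φ : Matrix (Fin d) (Fin d) ℂ → Matrix (Fin d) (Fin d) ℂ) (X : Mat d n) : Mat d n :=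
  fun a b => ∑ s : Cfg d n, ∑ t : Cfg d n,
    X s t * ∏ j, φ (Matrix.single (s j) (t j) 1) (a j) (b j)

/-- The `1 → 1` norm of a map on single-qudit operators. -/
noncomputable def norm1to1 {d : ℕ}
    (F : Matrix (Fin d) (Fin d) ℂ → Matrix (Fin d) (Fin d) ℂ) : ℝ :=
  sSup { r | ∃ ρ : Matrix (Fin d) (Fin d) ℂ, IsState ρ ∧ r = traceNorm (F ρ) }

/-- The diamond norm of a map on single-qudit operators. -/
noncomputable def diamondNorm {d : ℕ}
    (F : Matrix (Fin d) (Fin d) ℂ → Matrix (Fin d) (Fin d) ℂ) : ℝ :=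
  sSup { r | ∃ ρ : Matrix (Fin d × Fin d) (Fin d × Fin d) ℂ, IsState ρ ∧
    r = traceNorm (extendMap F ρ) }

/-- The contraction coefficient (`W₁ → W₁` norm) of a map on `n`-qudit operators. -/
noncomputable def W1toW1 {d n : ℕ} (Φ : Mat d n → Mat d n) : ℝ :=
  sSup { r | ∃ X : Mat d n, X.IsHermitian ∧ X.trace = 0 ∧ W1 X ≤ 1 ∧ r = W1 (Φ X) }

/-- The von Neumann entropy `S(ρ) = -Tr[ρ ln ρ]` (natural logarithm). -/
noncomputable def vnEntropy {ι : Type} [Fintype ι] [DecidableEq ι] (ρ : Matrix ι ι ℂ) : ℝ :=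
  if h : ρ.IsHermitian then -∑ i, h.eigenvalues i * Real.log (h.eigenvalues i) else 0

/-- The logarithm of a self-adjoint matrix, via the spectral decomposition. -/
noncomputable def matLog {ι : Type} [Fintype ι] [DecidableEq ι] (ρ : Matrix ι ι ℂ) :
    Matrix ι ι ℂ :=
  if h : ρ.IsHermitian then
    (h.eigenvectorUnitary : Matrix ι ι ℂ) *
      Matrix.diagonal (fun i => (Real.log (h.eigenvalues i) : ℂ)) *
      (star (h.eigenvectorUnitary : Matrix ι ι ℂ))
  else 0

/-- The quantum relative entropy `S(ρ‖σ) = Tr[ρ (ln ρ - ln σ)]`. -/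
noncomputable def relEntropy {ι : Type} [Fintype ι] [DecidableEq ι]
    (ρ σ : Matrix ι ι ℂ) : ℝ :=
  ((ρ * (matLog ρ - matLog σ)).trace).re

/-- The Hamming distance between two configurations. -/
def hamming {d n : ℕ} (x y : Cfg d n) : ℕ :=
  (Finset.univ.filter (fun i => x i ≠ y i)).card

/-- Probability distributions on a finite set. -/
def IsProb {α : Type} [Fintype α] (p : α → ℝ) : Prop :=
  (∀ x, 0 ≤ p x) ∧ ∑ x, p x = 1

/-- Couplings of two probability distributions. -/
def IsCoupling {α : Type} [Fintype α] (π : α × α → ℝ) (p q : α → ℝ) : Prop :=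
  IsProb π ∧ (∀ x, ∑ y, π (x, y) = p x) ∧ (∀ y, ∑ x, π (x, y) = q y)

/-- The classical Wasserstein distance of order 1 with respect to the Hamming distance. -/
noncomputable def classicalW1 {d n : ℕ} (p q : Cfg d n → ℝ) : ℝ :=
  sInf { c | ∃ π : Cfg d n × Cfg d n → ℝ, IsCoupling π p q ∧
    c = ∑ x : Cfg d n, ∑ y : Cfg d n, (hamming x y : ℝ) * π (x, y) }

/-- The Lipschitz constant of a function on `[d]^n` with respect to the Hamming distance. -/
noncomputable def classicalLip {d n : ℕ} (f : Cfg d n → ℝ) : ℝ :=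
  sSup { r | ∃ x y : Cfg d n, x ≠ y ∧ r = |f x - f y| / (hamming x y : ℝ) }


/-! ### Trace norm lemmas -/

section TraceNorm
variable {ι : Type} [Fintype ι] [DecidableEq ι]

lemma psd_diag_nonneg {A : Matrix ι ι ℂ} (hA : A.PosSemidef) (i : ι) : 0 ≤ A i i := by
  exact hA.diag_nonneg

lemma psd_trace_re_nonneg {A : Matrix ι ι ℂ} (hA : A.PosSemidef) : 0 ≤ A.trace.re := by
  have h : 0 ≤ A.trace := Finset.sum_nonneg fun i _ => psd_diag_nonneg hA i
  exact (Complex.nonneg_iff.mp h).1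

lemma traceNorm_nonneg (A : Matrix ι ι ℂ) : 0 ≤ traceNorm A := by
  have hd : (Matrix.diagonal ((fun x : ℝ => (x : ℂ)) ∘ Real.sqrt ∘
      (Matrix.posSemidef_conjTranspose_mul_self A).1.eigenvalues)).PosSemidef :=
    Matrix.posSemidef_diagonal_iff.mpr fun i => Complex.zero_le_real.mpr (Real.sqrt_nonneg _)
  unfold traceNorm
  exact psd_trace_re_nonneg (by
    simpa only [Matrix.star_eq_conjTranspose] using hd.mul_mul_conjTranspose_same
      ((Matrix.posSemidef_conjTranspose_mul_self A).1.eigenvectorUnitary : Matrix ι ι ℂ))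

lemma traceNorm_eq_of_sq {A S : Matrix ι ι ℂ} (hS : S.PosSemidef)
    (h : S ^ 2 = A.conjTranspose * A) : traceNorm A = S.trace.re := by
  have hH := (Matrix.posSemidef_conjTranspose_mul_self A).1
  have h1 : traceNorm A = (cfc Real.sqrt (A.conjTranspose * A)).trace.re := by
    rw [hH.cfc_eq]; rfl
  rw [h1, ← h, show cfc Real.sqrt (S ^ 2) = cfc (fun x => Real.sqrt (x ^ 2)) S from
    (cfc_comp_pow Real.sqrt 2 S Real.continuous_sqrt.continuousOn hS.1).symm, hS.1.cfc_eq]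
  congr 2
  conv_rhs => rw [hS.1.spectral_theorem]
  unfold Matrix.IsHermitian.cfc
  congr 2
  funext i
  simp [Real.sqrt_sq (hS.eigenvalues_nonneg i)]

lemma traceNorm_of_posSemidef {A : Matrix ι ι ℂ} (hA : A.PosSemidef) :
    traceNorm A = A.trace.re := by
  exact traceNorm_eq_of_sq hA (by rw [pow_two, hA.1.eq])

lemma rc_comp (f : ι → ℝ) : (RCLike.ofReal ∘ f : ι → ℂ) = fun i => (f i : ℂ) := by
  funext i
  simp [RCLike.ofReal_alg]

lemma ofReal_fun_mul (f g : ι → ℝ) :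
    (fun i => ((f i : ℝ) : ℂ) * ((g i : ℝ) : ℂ)) = fun i => ((f i * g i : ℝ) : ℂ) := by
  funext i; simp

lemma ofReal_fun_sub (f g : ι → ℝ) :
    (fun i => ((f i : ℝ) : ℂ) - ((g i : ℝ) : ℂ)) = fun i => ((f i - g i : ℝ) : ℂ) := by
  funext i; simp

lemma ofReal_fun_add (f g : ι → ℝ) :
    (fun i => ((f i : ℝ) : ℂ) + ((g i : ℝ) : ℂ)) = fun i => ((f i + g i : ℝ) : ℂ) := by
  funext i; simp

lemma conj_unitary_diag_mul {U : Matrix ι ι ℂ} (hU : star U * U = 1) (f g : ι → ℂ) :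
    (U * Matrix.diagonal f * star U) * (U * Matrix.diagonal g * star U) =
      U * Matrix.diagonal (fun i => f i * g i) * star U := by
  have h : U * Matrix.diagonal f * star U * (U * Matrix.diagonal g * star U)
      = U * (Matrix.diagonal f * (star U * U) * Matrix.diagonal g) * star U := by
    simp only [Matrix.mul_assoc]
  rw [h, hU, Matrix.mul_one, Matrix.diagonal_mul_diagonal]

lemma conj_unitary_trace_re {U : Matrix ι ι ℂ} (hU : star U * U = 1) (f : ι → ℝ) :
    ((U * Matrix.diagonal (fun i => ((f i : ℝ) : ℂ)) * star U).trace).re = ∑ i, f i := by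
  rw [Matrix.trace_mul_cycle, hU, Matrix.one_mul, Matrix.trace_diagonal, Complex.re_sum]
  simp

lemma conj_unitary_psd {U : Matrix ι ι ℂ} (f : ι → ℝ) (hf : ∀ i, 0 ≤ f i) :
    (U * Matrix.diagonal (fun i => ((f i : ℝ) : ℂ)) * star U).PosSemidef := by
  have hd : (Matrix.diagonal (fun i => ((f i : ℝ) : ℂ))).PosSemidef :=
    Matrix.posSemidef_diagonal_iff.mpr fun i => Complex.zero_le_real.mpr (hf i)
  simpa only [Matrix.star_eq_conjTranspose] using hd.mul_mul_conjTranspose_same U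

lemma traceNorm_hermitian {A : Matrix ι ι ℂ} (hA : A.IsHermitian) :
    traceNorm A = ∑ i, |hA.eigenvalues i| := by
  set U : Matrix ι ι ℂ := (hA.eigenvectorUnitary : Matrix ι ι ℂ) with hUdef
  have hU : star U * U = 1 := Matrix.mem_unitaryGroup_iff'.mp hA.eigenvectorUnitary.2
  set v : ι → ℝ := hA.eigenvalues with hv
  have hspec : A = U * Matrix.diagonal (fun i => ((v i : ℝ) : ℂ)) * star U := by
    rw [hUdef, hv, ← rc_comp]; exact hA.spectral_theorem
  set S := U * Matrix.diagonal (fun i => ((|v i| : ℝ) : ℂ)) * star U with hS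
  have hSpsd : S.PosSemidef := conj_unitary_psd _ fun i => abs_nonneg _
  have hsq : S ^ 2 = A.conjTranspose * A := by
    have hfun : (fun i => ((|v i| * |v i| : ℝ) : ℂ)) = fun i => ((v i * v i : ℝ) : ℂ) :=
      funext fun i => by rw [abs_mul_abs_self]
    rw [hA.eq, pow_two, hS, conj_unitary_diag_mul hU, ofReal_fun_mul, hspec,
      conj_unitary_diag_mul hU, ofReal_fun_mul, hfun]
  rw [traceNorm_eq_of_sq hSpsd hsq, hS, conj_unitary_trace_re hU]

lemma jordan_decomp {A : Matrix ι ι ℂ} (hA : A.IsHermitian) :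
    ∃ P Q : Matrix ι ι ℂ, P.PosSemidef ∧ Q.PosSemidef ∧ A = P - Q ∧
      P.trace.re + Q.trace.re = traceNorm A := by
  set U : Matrix ι ι ℂ := (hA.eigenvectorUnitary : Matrix ι ι ℂ) with hUdef
  have hU : star U * U = 1 := Matrix.mem_unitaryGroup_iff'.mp hA.eigenvectorUnitary.2
  set v : ι → ℝ := hA.eigenvalues with hv
  have hspec : A = U * Matrix.diagonal (fun i => ((v i : ℝ) : ℂ)) * star U := by
    rw [hUdef, hv, ← rc_comp]; exact hA.spectral_theorem
  refine ⟨U * Matrix.diagonal (fun i => ((max (v i) 0 : ℝ) : ℂ)) * star U,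
      U * Matrix.diagonal (fun i => ((max (-v i) 0 : ℝ) : ℂ)) * star U,
      conj_unitary_psd _ fun i => le_max_right _ _,
      conj_unitary_psd _ fun i => le_max_right _ _, ?_, ?_⟩
  · have hfun : (fun i => ((max (v i) 0 - max (-v i) 0 : ℝ) : ℂ)) = fun i => ((v i : ℝ) : ℂ) := by
      funext i
      congr 1
      rcases le_total 0 (v i) with h | h
      · rw [max_eq_left h, max_eq_right (neg_nonpos.mpr h), sub_zero]
      · rw [max_eq_right h, max_eq_left (neg_nonneg.mpr h), zero_sub, neg_neg]
    rw [← Matrix.sub_mul, ← Matrix.mul_sub, Matrix.diagonal_sub, ofReal_fun_sub, hfun, hspec]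
  · rw [traceNorm_hermitian hA, conj_unitary_trace_re hU, conj_unitary_trace_re hU,
      ← Finset.sum_add_distrib, ← hv]
    refine Finset.sum_congr rfl fun i _ => ?_
    rcases le_total 0 (v i) with h | h
    · rw [max_eq_left h, max_eq_right (neg_nonpos.mpr h), add_zero, abs_of_nonneg h]
    · rw [max_eq_right h, max_eq_left (neg_nonneg.mpr h), zero_add, abs_of_nonpos h]

lemma trace_mul_psd_re_nonneg {M N : Matrix ι ι ℂ} (hM : M.PosSemidef) (hN : N.PosSemidef) :
    0 ≤ ((M * N).trace).re := by
  obtain ⟨B, rfl⟩ : ∃ B : Matrix ι ι ℂ, N = B.conjTranspose * B := by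
    open scoped MatrixOrder in
    obtain ⟨X, hX, -, hXX⟩ := CFC.exists_sqrt_of_isSelfAdjoint_of_quasispectrumRestricts
      hN.1 (QuasispectrumRestricts.nnreal_of_nonneg hN.nonneg)
    exact ⟨X, by rw [← hXX, Matrix.IsHermitian.eq hX]⟩
  have h : (M * (B.conjTranspose * B)).trace = (B * M * B.conjTranspose).trace := by
    rw [← Matrix.mul_assoc, Matrix.trace_mul_cycle]
  rw [h]
  exact psd_trace_re_nonneg (hM.mul_mul_conjTranspose_same B)

lemma traceNorm_sub_le {P Q : Matrix ι ι ℂ} (hP : P.PosSemidef) (hQ : Q.PosSemidef) :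
    traceNorm (P - Q) ≤ P.trace.re + Q.trace.re := by
  have hA : (P - Q).IsHermitian := hP.1.sub hQ.1
  set U : Matrix ι ι ℂ := (hA.eigenvectorUnitary : Matrix ι ι ℂ) with hUdef
  have hU : star U * U = 1 := Matrix.mem_unitaryGroup_iff'.mp hA.eigenvectorUnitary.2
  have hU' : U * star U = 1 := Matrix.mem_unitaryGroup_iff.mp hA.eigenvectorUnitary.2
  set v : ι → ℝ := hA.eigenvalues with hv
  have hspec : P - Q = U * Matrix.diagonal (fun i => ((v i : ℝ) : ℂ)) * star U := by
    rw [hUdef, hv, ← rc_comp]; exact hA.spectral_theorem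
  set w : ι → ℝ := fun i => if 0 ≤ v i then 1 else -1 with hw
  set W : Matrix ι ι ℂ := U * Matrix.diagonal (fun i => ((w i : ℝ) : ℂ)) * star U with hW
  have hone : (1 : Matrix ι ι ℂ)
      = U * Matrix.diagonal (fun _ : ι => (((1:ℝ) : ℝ) : ℂ)) * star U := by
    rw [show (fun _ : ι => (((1:ℝ) : ℝ) : ℂ)) = fun _ : ι => (1:ℂ) by norm_num,
      Matrix.diagonal_one, Matrix.mul_one, hU']
  have honeW : (1 - W).PosSemidef := by
    rw [hone, hW, ← Matrix.sub_mul, ← Matrix.mul_sub, Matrix.diagonal_sub, ofReal_fun_sub]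
    exact conj_unitary_psd _ fun i => by rw [hw]; dsimp only; split <;> norm_num
  have honeW' : (1 + W).PosSemidef := by
    rw [hone, hW, ← Matrix.add_mul, ← Matrix.mul_add, Matrix.diagonal_add, ofReal_fun_add]
    exact conj_unitary_psd _ fun i => by rw [hw]; dsimp only; split <;> norm_num
  have htrW : ((W * (P - Q)).trace).re = traceNorm (P - Q) := by
    rw [traceNorm_hermitian hA, ← hv]
    nth_rewrite 1 [hspec]
    rw [hW, conj_unitary_diag_mul hU, ofReal_fun_mul, conj_unitary_trace_re hU]
    refine Finset.sum_congr rfl fun i _ => ?_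
    rw [hw]
    dsimp only
    split <;> rename_i h
    · rw [one_mul, abs_of_nonneg h]
    · rw [neg_one_mul, abs_of_neg (lt_of_not_ge h)]
  have h1 : ((W * P).trace).re ≤ P.trace.re := by
    have h0 := trace_mul_psd_re_nonneg honeW hP
    rw [Matrix.sub_mul, Matrix.one_mul, Matrix.trace_sub, Complex.sub_re] at h0
    linarith
  have h2 : -Q.trace.re ≤ ((W * Q).trace).re := by
    have h0 := trace_mul_psd_re_nonneg honeW' hQ
    rw [Matrix.add_mul, Matrix.one_mul, Matrix.trace_add, Complex.add_re] at h0
    linarith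
  have hsub : ((W * (P - Q)).trace).re = ((W * P).trace).re - ((W * Q).trace).re := by
    rw [Matrix.mul_sub, Matrix.trace_sub, Complex.sub_re]
  rw [← htrW, hsub]
  linarith

lemma traceNorm_le_psd_sub {A P Q : Matrix ι ι ℂ} (hP : P.PosSemidef) (hQ : Q.PosSemidef)
    (h : A = P - Q) : traceNorm A ≤ P.trace.re + Q.trace.re := by
  rw [h]; exact traceNorm_sub_le hP hQ

lemma traceNorm_submatrix {κ : Type} [Fintype κ] [DecidableEq κ]
    (A : Matrix κ κ ℂ) (e : ι ≃ κ) : traceNorm (A.submatrix e e) = traceNorm A := by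
  have h1 : ((A.submatrix e e).conjTranspose * (A.submatrix e e))
      = (A.conjTranspose * A).submatrix e e := by
    rw [Matrix.conjTranspose_submatrix, Matrix.submatrix_mul_equiv]
  have hH := (Matrix.posSemidef_conjTranspose_mul_self A).1
  set U : Matrix κ κ ℂ := (hH.eigenvectorUnitary : Matrix κ κ ℂ) with hUdef
  have hU : star U * U = 1 := Matrix.mem_unitaryGroup_iff'.mp hH.eigenvectorUnitary.2
  set v : κ → ℝ := hH.eigenvalues with hv
  have hspec : A.conjTranspose * A
      = U * Matrix.diagonal (fun i => ((v i : ℝ) : ℂ)) * star U := by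
    rw [hUdef, hv, ← rc_comp]; exact hH.spectral_theorem
  set S := U * Matrix.diagonal (fun i => ((Real.sqrt (v i) : ℝ) : ℂ)) * star U with hS
  have hT : traceNorm A = S.trace.re := rfl
  have hSpsd : S.PosSemidef := conj_unitary_psd _ fun i => Real.sqrt_nonneg _
  have hsq : (S.submatrix e e) ^ 2
      = (A.submatrix e e).conjTranspose * (A.submatrix e e) := by
    rw [h1, pow_two, Matrix.submatrix_mul_equiv, hS, conj_unitary_diag_mul hU, ofReal_fun_mul,
      hspec]
    congr 4
    funext i
    rw [Real.mul_self_sqrt ((Matrix.posSemidef_conjTranspose_mul_self A).eigenvalues_nonneg i)]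
  rw [traceNorm_eq_of_sq (hSpsd.submatrix e) hsq, hT]
  have ht : (S.submatrix e e).trace = S.trace := by
    rw [Matrix.trace, Matrix.trace]
    simp only [Matrix.diag_apply, Matrix.submatrix_apply]
    exact Equiv.sum_comp e fun j => S j j
  rw [ht]

end TraceNorm
/-! ### Configuration plumbing -/

section Cfg
variable {d n : ℕ}

lemma ins_apply_self (i : Fin n) (a : {j : Fin n // j ≠ i} → Fin d) (s : Fin d) :
    ins i a s i = s := by simp [ins]

lemma ins_apply_ne (i : Fin n) (a : {j : Fin n // j ≠ i} → Fin d) (s : Fin d)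
    {j : Fin n} (h : j ≠ i) : ins i a s j = a ⟨j, h⟩ := by simp [ins, h]

lemma ins_restr (i : Fin n) (a : Cfg d n) (s : Fin d) :
    ins i (fun j => a j) s = Function.update a i s := by
  funext j
  rcases eq_or_ne j i with rfl | h
  · simp [ins]
  · simp [ins, h, Function.update_of_ne h]

lemma update_ins (i : Fin n) (a : {j : Fin n // j ≠ i} → Fin d) (s t : Fin d) :
    Function.update (ins i a s) i t = ins i a t := by
  funext j
  rcases eq_or_ne j i with rfl | h
  · simp [ins]
  · simp [Function.update_of_ne h, ins, h]

lemma restr_ins (i : Fin n) (a : {j : Fin n // j ≠ i} → Fin d) (s : Fin d) :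
    (fun j : {j : Fin n // j ≠ i} => ins i a s j) = a := by
  funext j; exact ins_apply_ne i a s j.2

/-- Splitting a configuration into the `i`-th component and the rest. -/
def splitCfg (i : Fin n) : Cfg d n ≃ Fin d × ({j : Fin n // j ≠ i} → Fin d) where
  toFun a := (a i, fun j => a j)
  invFun p := ins i p.2 p.1
  left_inv a := by
    funext j
    rcases eq_or_ne j i with rfl | h
    · simp [ins]
    · simp [ins, h]
  right_inv p := by
    obtain ⟨s, a⟩ := p
    simp only [Prod.mk.injEq]
    exact ⟨ins_apply_self i a s, restr_ins i a s⟩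

lemma update_ins_ne {i j : Fin n} (hij : i ≠ j) (a : {k : Fin n // k ≠ j} → Fin d)
    (s u : Fin d) :
    Function.update (ins j a s) i u = ins j (Function.update a ⟨i, hij⟩ u) s := by
  funext k
  rcases eq_or_ne k j with rfl | hkj
  · rw [Function.update_of_ne (Ne.symm hij) , ins_apply_self, ins_apply_self]
  · rcases eq_or_ne k i with rfl | hki
    · rw [Function.update_self, ins_apply_ne _ _ _ hij, Function.update_self]
    · rw [Function.update_of_ne hki, ins_apply_ne _ _ _ hkj, ins_apply_ne _ _ _ hkj,
        Function.update_of_ne (by simp [Subtype.ext_iff, hki])]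
end Cfg

/-! ### `applyAt` lemmas -/

section ApplyAt
variable {d n : ℕ}

lemma applyAt_apply (i : Fin n) (φ : Matrix (Fin d) (Fin d) ℂ → Matrix (Fin d) (Fin d) ℂ)
    (X : Mat d n) (a b : Cfg d n) :
    applyAt i φ X a b
      = φ (fun s t => X (ins i (fun j => a j) s) (ins i (fun j => b j) t)) (a i) (b i) := by
  have h : (fun s t => X (Function.update a i s) (Function.update b i t))
      = fun s t => X (ins i (fun j => a j) s) (ins i (fun j => b j) t) := by
    funext s t; rw [ins_restr, ins_restr]
  show φ (fun s t => X (Function.update a i s) (Function.update b i t)) (a i) (b i) = _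
  rw [h]

lemma applyAt_eq_submatrix {R : Type} [Fintype R] [DecidableEq R]
    (i : Fin n) (φ : Matrix (Fin d) (Fin d) ℂ → Matrix (Fin d) (Fin d) ℂ) (X : Mat d n)
    (er : ({j : Fin n // j ≠ i} → Fin d) ≃ R) :
    applyAt i φ X = (extendMap φ (X.submatrix
        ((splitCfg i).trans (Equiv.prodCongr (Equiv.refl (Fin d)) er)).symm
        ((splitCfg i).trans (Equiv.prodCongr (Equiv.refl (Fin d)) er)).symm)).submatrix
        ((splitCfg i).trans (Equiv.prodCongr (Equiv.refl (Fin d)) er))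
        ((splitCfg i).trans (Equiv.prodCongr (Equiv.refl (Fin d)) er)) := by
  set e := (splitCfg (d := d) i).trans (Equiv.prodCongr (Equiv.refl (Fin d)) er) with he
  funext a b
  rw [Matrix.submatrix_apply, applyAt_apply]
  show φ (fun s t => X (ins i (fun j => a j) s) (ins i (fun j => b j) t)) (a i) (b i)
    = φ (fun s t => (X.submatrix e.symm e.symm) (s, (e a).2) (t, (e b).2)) (e a).1 (e b).1
  have h : (fun s t => X (ins i (fun j => a j) s) (ins i (fun j => b j) t))
      = fun s t => (X.submatrix e.symm e.symm) (s, (e a).2) (t, (e b).2) := by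
    funext s t
    rw [Matrix.submatrix_apply]
    congr 1
    · show ins i (fun j => a j) s = ins i (er.symm (er (fun j => a j))) s
      rw [er.symm_apply_apply]
    · show ins i (fun j => b j) t = ins i (er.symm (er (fun j => b j))) t
      rw [er.symm_apply_apply]
  rw [h]
  rfl

lemma applyAt_posSemidef (i : Fin n)
    (φ : Matrix (Fin d) (Fin d) ℂ →ₗ[ℂ] Matrix (Fin d) (Fin d) ℂ) (hφ : IsCPTP φ)
    {X : Mat d n} (hX : X.PosSemidef) : (applyAt i (fun M => φ M) X).PosSemidef := by
  rw [applyAt_eq_submatrix i _ X (Fintype.equivFin ({j : Fin n // j ≠ i} → Fin d))]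
  exact (hφ.1 _ _ (hX.submatrix _)).submatrix _

lemma applyAt_sub (i : Fin n)
    (φ : Matrix (Fin d) (Fin d) ℂ →ₗ[ℂ] Matrix (Fin d) (Fin d) ℂ) (X Y : Mat d n) :
    applyAt i (fun M => φ M) (X - Y)
      = applyAt i (fun M => φ M) X - applyAt i (fun M => φ M) Y := by
  funext a b
  have h : (fun s t => (X - Y) (Function.update a i s) (Function.update b i t))
      = (fun s t => X (Function.update a i s) (Function.update b i t))
        - fun s t => Y (Function.update a i s) (Function.update b i t) := by
    funext s t; simp [Matrix.sub_apply]
  show φ (fun s t => (X - Y) (Function.update a i s) (Function.update b i t)) (a i) (b i) = _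
  rw [h]
  exact congrFun (congrFun (map_sub φ _ _) _) _

lemma applyAt_sum {m : ℕ} (i : Fin n)
    (φ : Matrix (Fin d) (Fin d) ℂ →ₗ[ℂ] Matrix (Fin d) (Fin d) ℂ) (Y : Fin m → Mat d n) :
    applyAt i (fun M => φ M) (∑ j, Y j) = ∑ j, applyAt i (fun M => φ M) (Y j) := by
  funext a b
  have h : (fun s t => (∑ j, Y j) (Function.update a i s) (Function.update b i t))
      = ∑ j, (fun s t => Y j (Function.update a i s) (Function.update b i t)) := by
    funext s t
    rw [Matrix.sum_apply]
    simp [Matrix.sum_apply]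
  show φ (fun s t => (∑ j, Y j) (Function.update a i s) (Function.update b i t)) (a i) (b i) = _
  rw [h]
  exact (congrFun (congrFun (map_sum φ (fun j => (fun s t => Y j (Function.update a i s)
    (Function.update b i t) : Matrix (Fin d) (Fin d) ℂ)) Finset.univ) (a i)) (b i)).trans
    (by rw [Matrix.sum_apply, Matrix.sum_apply]; exact Finset.sum_congr rfl fun c _ => rfl)

lemma applyAt_isHermitian (i : Fin n)
    (φ : Matrix (Fin d) (Fin d) ℂ →ₗ[ℂ] Matrix (Fin d) (Fin d) ℂ) (hφ : IsCPTP φ)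
    {X : Mat d n} (hX : X.IsHermitian) : (applyAt i (fun M => φ M) X).IsHermitian := by
  obtain ⟨P, Q, hP, hQ, hPQ, -⟩ := jordan_decomp hX
  rw [hPQ, applyAt_sub]
  exact ((applyAt_posSemidef i φ hφ hP).1).sub ((applyAt_posSemidef i φ hφ hQ).1)

lemma sum_diag_applyAt (i : Fin n)
    (φ : Matrix (Fin d) (Fin d) ℂ → Matrix (Fin d) (Fin d) ℂ)
    (hTP : ∀ M, (φ M).trace = M.trace) (X : Mat d n) (r : {j : Fin n // j ≠ i} → Fin d) :
    ∑ s, applyAt i φ X (ins i r s) (ins i r s) = ∑ s, X (ins i r s) (ins i r s) := by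
  have hmat : ∀ s : Fin d,
      (fun u v => X (Function.update (ins i r s) i u) (Function.update (ins i r s) i v))
        = fun u v => X (ins i r u) (ins i r v) := by
    intro s; funext u v; rw [update_ins, update_ins]
  calc ∑ s, applyAt i φ X (ins i r s) (ins i r s)
      = ∑ s : Fin d, φ (fun u v => X (ins i r u) (ins i r v)) s s := by
        refine Finset.sum_congr rfl fun s _ => ?_
        show φ (fun u v => X (Function.update (ins i r s) i u)
            (Function.update (ins i r s) i v)) (ins i r s i) (ins i r s i) = _
        rw [hmat s]
        simp only [ins_apply_self]
    _ = (φ (fun u v => X (ins i r u) (ins i r v))).trace := rfl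
    _ = (Matrix.of fun u v => X (ins i r u) (ins i r v)).trace := hTP _
    _ = ∑ s, X (ins i r s) (ins i r s) := rfl

lemma trace_applyAt (i : Fin n)
    (φ : Matrix (Fin d) (Fin d) ℂ → Matrix (Fin d) (Fin d) ℂ)
    (hTP : ∀ M, (φ M).trace = M.trace) (X : Mat d n) :
    (applyAt i φ X).trace = X.trace := by
  have h1 : ∀ Y : Mat d n, Y.trace
      = ∑ r : {j : Fin n // j ≠ i} → Fin d, ∑ s : Fin d, Y (ins i r s) (ins i r s) := by
    intro Y
    rw [Matrix.trace, ← Equiv.sum_comp (splitCfg (d := d) i).symm (fun a => Y.diag a),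
      Fintype.sum_prod_type, Finset.sum_comm]
    rfl
  rw [h1, h1]
  exact Finset.sum_congr rfl fun r _ => sum_diag_applyAt i φ hTP X r

lemma ptrace_applyAt_same (i : Fin n)
    (φ : Matrix (Fin d) (Fin d) ℂ → Matrix (Fin d) (Fin d) ℂ)
    (hTP : ∀ M, (φ M).trace = M.trace) (X : Mat d n) :
    ptrace i (applyAt i φ X) = ptrace i X := by
  funext a b
  show ∑ s, applyAt i φ X (ins i a s) (ins i b s) = ∑ s, X (ins i a s) (ins i b s)
  have hmat : ∀ s : Fin d,
      (fun u v => X (Function.update (ins i a s) i u) (Function.update (ins i b s) i v))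
        = fun u v => X (ins i a u) (ins i b v) := by
    intro s; funext u v; rw [update_ins, update_ins]
  calc ∑ s, applyAt i φ X (ins i a s) (ins i b s)
      = ∑ s : Fin d, φ (fun u v => X (ins i a u) (ins i b v)) s s := by
        refine Finset.sum_congr rfl fun s _ => ?_
        show φ (fun u v => X (Function.update (ins i a s) i u)
            (Function.update (ins i b s) i v)) (ins i a s i) (ins i b s i) = _
        rw [hmat s]
        simp only [ins_apply_self]
    _ = (φ (fun u v => X (ins i a u) (ins i b v))).trace := rfl
    _ = (Matrix.of fun u v => X (ins i a u) (ins i b v)).trace := hTP _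
    _ = ∑ s, X (ins i a s) (ins i b s) := rfl

lemma ptrace_applyAt_ne {i j : Fin n} (hij : i ≠ j)
    (φ : Matrix (Fin d) (Fin d) ℂ →ₗ[ℂ] Matrix (Fin d) (Fin d) ℂ) (X : Mat d n)
    (hX : ptrace j X = 0) : ptrace j (applyAt i (fun M => φ M) X) = 0 := by
  funext a b
  show ∑ s, applyAt i (fun M => φ M) X (ins j a s) (ins j b s) = 0
  have step : ∀ s : Fin d, applyAt i (fun M => φ M) X (ins j a s) (ins j b s)
      = φ (fun u v => X (ins j (Function.update a ⟨i, hij⟩ u) s)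
          (ins j (Function.update b ⟨i, hij⟩ v) s)) (a ⟨i, hij⟩) (b ⟨i, hij⟩) := by
    intro s
    show φ (fun u v => X (Function.update (ins j a s) i u)
        (Function.update (ins j b s) i v)) (ins j a s i) (ins j b s i) = _
    have harg : (fun u v => X (Function.update (ins j a s) i u)
        (Function.update (ins j b s) i v))
        = fun u v => X (ins j (Function.update a ⟨i, hij⟩ u) s)
          (ins j (Function.update b ⟨i, hij⟩ v) s) := by
      funext u v; rw [update_ins_ne hij, update_ins_ne hij]
    rw [harg, ins_apply_ne j a s hij, ins_apply_ne j b s hij]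
  rw [Finset.sum_congr rfl fun s _ => step s]
  have hmain : (∑ s : Fin d, (fun u v => X (ins j (Function.update a ⟨i, hij⟩ u) s)
      (ins j (Function.update b ⟨i, hij⟩ v) s) : Matrix (Fin d) (Fin d) ℂ)) = 0 := by
    funext u v
    have : (∑ s : Fin d, (fun u v => X (ins j (Function.update a ⟨i, hij⟩ u) s)
        (ins j (Function.update b ⟨i, hij⟩ v) s) : Matrix (Fin d) (Fin d) ℂ)) u v
        = ∑ s : Fin d, X (ins j (Function.update a ⟨i, hij⟩ u) s)
          (ins j (Function.update b ⟨i, hij⟩ v) s) := by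
      rw [Finset.sum_apply, Finset.sum_apply]
    rw [this]
    have h0 := congrFun (congrFun hX (Function.update a ⟨i, hij⟩ u))
      (Function.update b ⟨i, hij⟩ v)
    simpa [ptrace] using h0
  calc ∑ s : Fin d, φ (fun u v => X (ins j (Function.update a ⟨i, hij⟩ u) s)
      (ins j (Function.update b ⟨i, hij⟩ v) s)) (a ⟨i, hij⟩) (b ⟨i, hij⟩)
      = (∑ s : Fin d, φ (fun u v => X (ins j (Function.update a ⟨i, hij⟩ u) s)
          (ins j (Function.update b ⟨i, hij⟩ v) s))) (a ⟨i, hij⟩) (b ⟨i, hij⟩) := by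
        rw [Matrix.sum_apply]
    _ = (φ (∑ s : Fin d, (fun u v => X (ins j (Function.update a ⟨i, hij⟩ u) s)
          (ins j (Function.update b ⟨i, hij⟩ v) s) : Matrix (Fin d) (Fin d) ℂ)))
          (a ⟨i, hij⟩) (b ⟨i, hij⟩) := congrFun (congrFun (map_sum φ _ _).symm _) _
    _ = 0 := congrFun (congrFun ((congrArg φ hmain).trans (map_zero φ)) _) _

lemma traceNorm_applyAt_le (i : Fin n)
    (φ : Matrix (Fin d) (Fin d) ℂ →ₗ[ℂ] Matrix (Fin d) (Fin d) ℂ) (hφ : IsCPTP φ)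
    {X : Mat d n} (hX : X.IsHermitian) :
    traceNorm (applyAt i (fun M => φ M) X) ≤ traceNorm X := by
  obtain ⟨P, Q, hP, hQ, hPQ, htr⟩ := jordan_decomp hX
  have hsub : applyAt i (fun M => φ M) X
      = applyAt i (fun M => φ M) P - applyAt i (fun M => φ M) Q := by
    rw [hPQ, applyAt_sub]
  calc traceNorm (applyAt i (fun M => φ M) X)
      ≤ ((applyAt i (fun M => φ M) P).trace).re + ((applyAt i (fun M => φ M) Q).trace).re :=
        traceNorm_le_psd_sub (applyAt_posSemidef i φ hφ hP) (applyAt_posSemidef i φ hφ hQ) hsub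
    _ = P.trace.re + Q.trace.re := by
        rw [trace_applyAt i _ hφ.2 P, trace_applyAt i _ hφ.2 Q]
    _ = traceNorm X := htr

lemma applyAt_applyAt (i : Fin n)
    (φ ψ : Matrix (Fin d) (Fin d) ℂ → Matrix (Fin d) (Fin d) ℂ) (X : Mat d n) :
    applyAt i φ (applyAt i ψ X) = applyAt i (fun M => φ (ψ M)) X := by
  funext a b
  show φ (fun s t => applyAt i ψ X (Function.update a i s) (Function.update b i t))
      (a i) (b i) = φ (ψ (fun u v => X (Function.update a i u) (Function.update b i v)))
      (a i) (b i)
  congr 1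
  funext s t
  show ψ (fun u v => X (Function.update (Function.update a i s) i u)
      (Function.update (Function.update b i t) i v))
      ((Function.update a i s) i) ((Function.update b i t) i) = _
  rw [Function.update_self, Function.update_self]
  congr 1
  funext u v
  rw [Function.update_idem, Function.update_idem]

lemma applyAt_id (i : Fin n) (X : Mat d n) : applyAt i (fun M => M) X = X := by
  funext a b
  show X (Function.update a i (a i)) (Function.update b i (b i)) = X a b
  rw [Function.update_eq_self, Function.update_eq_self]

end ApplyAt
/-! ### Existence of decompositions -/

section Decomp
variable {d n : ℕ}

lemma flt_ne {j i : Fin n} (h : (j : ℕ) < (i : ℕ)) : j ≠ i := by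
  intro e; subst e; exact Nat.lt_irrefl _ h

/-- `mix k s a` takes the first `k` coordinates from `s` and the rest from `a`. -/
def mix (k : ℕ) (s a : Cfg d n) : Cfg d n := fun j => if (j : ℕ) < k then s j else a j

/-- `I/d^k` on the first `k` qudits tensored with the marginal of `X` on the rest. -/
noncomputable def Gmat (X : Mat d n) (k : ℕ) : Mat d n := fun a b =>
  (if ∀ j : Fin n, (j : ℕ) < k → a j = b j then (1:ℂ) else 0) *
    (((d : ℂ) ^ n)⁻¹ * ∑ s : Cfg d n, X (mix k s a) (mix k s b))

lemma card_cfg : Fintype.card (Cfg d n) = d ^ n := by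
  show Fintype.card (Fin n → Fin d) = d ^ n
  simp

lemma Gmat_zero (hd : 0 < d) (X : Mat d n) : Gmat X 0 = X := by
  have hc : ((d:ℂ) ^ n) ≠ 0 := pow_ne_zero _ (Nat.cast_ne_zero.mpr (by omega))
  funext a b
  show (if ∀ j : Fin n, (j : ℕ) < 0 → a j = b j then (1:ℂ) else 0) *
    (((d : ℂ) ^ n)⁻¹ * ∑ s : Cfg d n, X (mix 0 s a) (mix 0 s b)) = X a b
  rw [if_pos (fun j h => absurd h (Nat.not_lt_zero _)), one_mul]
  have hmix : ∀ (s c : Cfg d n), mix 0 s c = c := fun s c => funext fun j => by simp [mix]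
  rw [Finset.sum_congr rfl fun s _ => by rw [hmix s a, hmix s b]]
  rw [Finset.sum_const, Finset.card_univ, card_cfg, nsmul_eq_mul]
  push_cast
  field_simp

lemma Gmat_n (X : Mat d n) (hXtr : X.trace = 0) : Gmat X n = 0 := by
  funext a b
  show (if ∀ j : Fin n, (j : ℕ) < n → a j = b j then (1:ℂ) else 0) *
    (((d : ℂ) ^ n)⁻¹ * ∑ s : Cfg d n, X (mix n s a) (mix n s b)) = 0
  have hmix : ∀ (s c : Cfg d n), mix n s c = s := fun s c => funext fun j => by
    simp [mix, j.isLt]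
  rw [Finset.sum_congr rfl fun s _ => by rw [hmix s a, hmix s b]]
  have : ∑ s : Cfg d n, X s s = X.trace := rfl
  rw [this, hXtr, mul_zero, mul_zero]

lemma Gmat_isHermitian {X : Mat d n} (hX : X.IsHermitian) (k : ℕ) :
    (Gmat X k).IsHermitian := by
  show (Gmat X k).conjTranspose = Gmat X k
  funext a b
  rw [Matrix.conjTranspose_apply]
  show star ((if ∀ j : Fin n, (j : ℕ) < k → b j = a j then (1:ℂ) else 0) *
    (((d : ℂ) ^ n)⁻¹ * ∑ s : Cfg d n, X (mix k s b) (mix k s a))) = _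
  have h1 : star (if ∀ j : Fin n, (j:ℕ) < k → b j = a j then (1:ℂ) else 0)
      = (if ∀ j : Fin n, (j:ℕ) < k → a j = b j then (1:ℂ) else 0) := by
    rw [apply_ite star, star_one, star_zero]
    exact if_congr (forall_congr' fun j => imp_congr Iff.rfl eq_comm) rfl rfl
  have h2 : star (((d:ℂ)^n)⁻¹) = ((d:ℂ)^n)⁻¹ := by simp
  have h3 : star (∑ s : Cfg d n, X (mix k s b) (mix k s a))
      = ∑ s : Cfg d n, X (mix k s a) (mix k s b) := by
    rw [star_sum]
    refine Finset.sum_congr rfl fun s _ => ?_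
    rw [← Matrix.conjTranspose_apply, hX.eq]
  rw [star_mul', h1, star_mul', h2, h3]
  rfl

lemma ptrace_sub (i : Fin n) (A B : Mat d n) :
    ptrace i (A - B) = ptrace i A - ptrace i B := by
  funext a b
  show ∑ s, (A - B) (ins i a s) (ins i b s)
    = (ptrace i A - ptrace i B) a b
  simp [Matrix.sub_apply, ptrace, Finset.sum_sub_distrib]

lemma mix_update (i : Fin n) (c : {k : Fin n // k ≠ i} → Fin d) (t : Fin d) (s : Cfg d n) :
    mix (i:ℕ) s (ins i c t) = mix (i:ℕ) (Function.update s i t)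
      (ins i c (Function.update s i t i)) := by
  funext j
  show (if (j:ℕ) < (i:ℕ) then s j else ins i c t j)
    = if (j:ℕ) < (i:ℕ) then Function.update s i t j else ins i c (Function.update s i t i) j
  by_cases hj : (j:ℕ) < (i:ℕ)
  · rw [if_pos hj, if_pos hj, Function.update_of_ne (flt_ne hj)]
  · rw [if_neg hj, if_neg hj, Function.update_self]

lemma mix_succ (i : Fin n) (c : {k : Fin n // k ≠ i} → Fin d) (t : Fin d) (s : Cfg d n) :
    mix ((i:ℕ)+1) s (ins i c t) = mix (i:ℕ) s (ins i c (s i)) := by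
  funext j
  show (if (j:ℕ) < (i:ℕ)+1 then s j else ins i c t j)
    = if (j:ℕ) < (i:ℕ) then s j else ins i c (s i) j
  rcases Nat.lt_trichotomy (j:ℕ) (i:ℕ) with h | h | h
  · rw [if_pos (Nat.lt_succ_of_lt h), if_pos h]
  · have : j = i := Fin.ext h
    subst this
    rw [if_pos (Nat.lt_succ_self _), if_neg (Nat.lt_irrefl _), ins_apply_self]
  · have hne : j ≠ i := fun e => by subst e; exact Nat.lt_irrefl _ h
    rw [if_neg (by omega), if_neg (by omega), ins_apply_ne _ _ _ hne, ins_apply_ne _ _ _ hne]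

lemma ptrace_Gmat (X : Mat d n) (i : Fin n) :
    ptrace i (Gmat X (i:ℕ)) = ptrace i (Gmat X ((i:ℕ)+1)) := by
  funext a b
  show ∑ t, Gmat X (i:ℕ) (ins i a t) (ins i b t)
    = ∑ t, Gmat X ((i:ℕ)+1) (ins i a t) (ins i b t)
  have hcond1 : ∀ t : Fin d, ((∀ j : Fin n, (j:ℕ) < (i:ℕ) → ins i a t j = ins i b t j)
      ↔ (∀ j : Fin n, ∀ hj : (j:ℕ) < (i:ℕ), a ⟨j, flt_ne hj⟩ = b ⟨j, flt_ne hj⟩)) := by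
    intro t
    constructor
    · intro h j hj
      have := h j hj
      rwa [ins_apply_ne _ _ _ (flt_ne hj), ins_apply_ne _ _ _ (flt_ne hj)] at this
    · intro h j hj
      rw [ins_apply_ne _ _ _ (flt_ne hj), ins_apply_ne _ _ _ (flt_ne hj)]
      exact h j hj
  have hcond2 : ∀ t : Fin d, ((∀ j : Fin n, (j:ℕ) < (i:ℕ)+1 → ins i a t j = ins i b t j)
      ↔ (∀ j : Fin n, ∀ hj : (j:ℕ) < (i:ℕ), a ⟨j, flt_ne hj⟩ = b ⟨j, flt_ne hj⟩)) := by
    intro t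
    constructor
    · intro h j hj
      have := h j (Nat.lt_succ_of_lt hj)
      rwa [ins_apply_ne _ _ _ (flt_ne hj), ins_apply_ne _ _ _ (flt_ne hj)] at this
    · intro h j hj
      rcases Nat.lt_succ_iff_lt_or_eq.mp hj with h' | h'
      · rw [ins_apply_ne _ _ _ (flt_ne h'), ins_apply_ne _ _ _ (flt_ne h')]
        exact h j h'
      · have : j = i := Fin.ext h'
        subst this
        rw [ins_apply_self, ins_apply_self]
  by_cases hC : ∀ j : Fin n, ∀ hj : (j:ℕ) < (i:ℕ), a ⟨j, flt_ne hj⟩ = b ⟨j, flt_ne hj⟩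
  · have hL : ∀ t : Fin d, Gmat X (i:ℕ) (ins i a t) (ins i b t)
        = ((d : ℂ) ^ n)⁻¹ * ∑ s : Cfg d n,
          X (mix (i:ℕ) s (ins i a t)) (mix (i:ℕ) s (ins i b t)) := by
      intro t
      show (if ∀ j : Fin n, (j:ℕ) < (i:ℕ) → ins i a t j = ins i b t j then (1:ℂ) else 0) *
        (((d : ℂ) ^ n)⁻¹ * ∑ s : Cfg d n,
          X (mix (i:ℕ) s (ins i a t)) (mix (i:ℕ) s (ins i b t))) = _
      rw [if_pos ((hcond1 t).mpr hC), one_mul]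
    have hR : ∀ t : Fin d, Gmat X ((i:ℕ)+1) (ins i a t) (ins i b t)
        = ((d : ℂ) ^ n)⁻¹ * ∑ s : Cfg d n,
          X (mix ((i:ℕ)+1) s (ins i a t)) (mix ((i:ℕ)+1) s (ins i b t)) := by
      intro t
      show (if ∀ j : Fin n, (j:ℕ) < (i:ℕ)+1 → ins i a t j = ins i b t j then (1:ℂ) else 0) *
        (((d : ℂ) ^ n)⁻¹ * ∑ s : Cfg d n,
          X (mix ((i:ℕ)+1) s (ins i a t)) (mix ((i:ℕ)+1) s (ins i b t))) = _
      rw [if_pos ((hcond2 t).mpr hC), one_mul]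
    rw [Finset.sum_congr rfl fun t _ => hL t, Finset.sum_congr rfl fun t _ => hR t,
      ← Finset.mul_sum, ← Finset.mul_sum]
    congr 1
    -- main counting identity
    let E : (Fin d × Cfg d n) ≃ (Cfg d n × Fin d) :=
      { toFun := fun p => (Function.update p.2 i p.1, p.2 i),
        invFun := fun q => (q.1 i, Function.update q.1 i q.2),
        left_inv := fun p => by
          obtain ⟨t, s⟩ := p
          simp [Function.update_self, Function.update_idem, Function.update_eq_self],
        right_inv := fun q => by
          obtain ⟨s, u⟩ := q
          simp [Function.update_self, Function.update_idem, Function.update_eq_self] }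
    calc ∑ t : Fin d, ∑ s : Cfg d n, X (mix (i:ℕ) s (ins i a t)) (mix (i:ℕ) s (ins i b t))
        = ∑ t : Fin d, ∑ s : Cfg d n,
            X (mix (i:ℕ) (Function.update s i t) (ins i a (Function.update s i t i)))
              (mix (i:ℕ) (Function.update s i t) (ins i b (Function.update s i t i))) := by
          refine Finset.sum_congr rfl fun t _ => Finset.sum_congr rfl fun s _ => ?_
          rw [← mix_update i a t s, ← mix_update i b t s]
      _ = ∑ p : Fin d × Cfg d n,
            X (mix (i:ℕ) (Function.update p.2 i p.1) (ins i a (Function.update p.2 i p.1 i)))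
              (mix (i:ℕ) (Function.update p.2 i p.1)
                (ins i b (Function.update p.2 i p.1 i))) := by
          exact (Fintype.sum_prod_type (f := fun p : Fin d × Cfg d n =>
            X (mix (i:ℕ) (Function.update p.2 i p.1) (ins i a (Function.update p.2 i p.1 i)))
              (mix (i:ℕ) (Function.update p.2 i p.1)
                (ins i b (Function.update p.2 i p.1 i))))).symm
      _ = ∑ q : Cfg d n × Fin d,
            X (mix (i:ℕ) q.1 (ins i a (q.1 i))) (mix (i:ℕ) q.1 (ins i b (q.1 i))) :=
          Fintype.sum_equiv E _ _ (fun p => rfl)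
      _ = ∑ s : Cfg d n, ∑ u : Fin d,
            X (mix (i:ℕ) s (ins i a (s i))) (mix (i:ℕ) s (ins i b (s i))) := by
          exact Fintype.sum_prod_type (f := fun q : Cfg d n × Fin d =>
            X (mix (i:ℕ) q.1 (ins i a (q.1 i))) (mix (i:ℕ) q.1 (ins i b (q.1 i))))
      _ = ∑ u : Fin d, ∑ s : Cfg d n,
            X (mix (i:ℕ) s (ins i a (s i))) (mix (i:ℕ) s (ins i b (s i))) := Finset.sum_comm
      _ = ∑ t : Fin d, ∑ s : Cfg d n,
            X (mix ((i:ℕ)+1) s (ins i a t)) (mix ((i:ℕ)+1) s (ins i b t)) := by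
          refine Finset.sum_congr rfl fun t _ => Finset.sum_congr rfl fun s _ => ?_
          rw [mix_succ i a t s, mix_succ i b t s]
  · have hL : ∀ t : Fin d, Gmat X (i:ℕ) (ins i a t) (ins i b t) = 0 := by
      intro t
      show (if ∀ j : Fin n, (j:ℕ) < (i:ℕ) → ins i a t j = ins i b t j then (1:ℂ) else 0) *
        (((d : ℂ) ^ n)⁻¹ * ∑ s : Cfg d n,
          X (mix (i:ℕ) s (ins i a t)) (mix (i:ℕ) s (ins i b t))) = 0
      rw [if_neg (fun h => hC ((hcond1 t).mp h)), zero_mul]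
    have hR : ∀ t : Fin d, Gmat X ((i:ℕ)+1) (ins i a t) (ins i b t) = 0 := by
      intro t
      show (if ∀ j : Fin n, (j:ℕ) < (i:ℕ)+1 → ins i a t j = ins i b t j then (1:ℂ) else 0) *
        (((d : ℂ) ^ n)⁻¹ * ∑ s : Cfg d n,
          X (mix ((i:ℕ)+1) s (ins i a t)) (mix ((i:ℕ)+1) s (ins i b t))) = 0
      rw [if_neg (fun h => hC ((hcond2 t).mp h)), zero_mul]
    rw [Finset.sum_congr rfl fun t _ => hL t, Finset.sum_congr rfl fun t _ => hR t]

lemma W1Set_nonempty (hd : 0 < d) {X : Mat d n} (hX : X.IsHermitian) (hXtr : X.trace = 0) :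
    (W1Set X).Nonempty := by
  refine ⟨_, fun i => Gmat X (i:ℕ) - Gmat X ((i:ℕ)+1),
    fun i => (Gmat_isHermitian hX _).sub (Gmat_isHermitian hX _),
    fun i => by rw [ptrace_sub, ptrace_Gmat X i, sub_self], ?_, rfl⟩
  rw [Fin.sum_univ_eq_sum_range (fun k => Gmat X k - Gmat X (k+1)) n,
    Finset.sum_range_sub' (fun k => Gmat X k) n, Gmat_zero hd X, Gmat_n X hXtr, sub_zero]

end Decomp
/-! ### Permutations -/

section Perm
variable {d n : ℕ}

def permEquiv (π : Equiv.Perm (Fin n)) : Cfg d n ≃ Cfg d n where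
  toFun a := a ∘ π
  invFun a := a ∘ π.symm
  left_inv a := by funext j; simp
  right_inv a := by funext j; simp

lemma permuteMat_eq_submatrix (π : Equiv.Perm (Fin n)) (X : Mat d n) :
    permuteMat π X = X.submatrix (permEquiv π) (permEquiv π) := rfl

lemma permuteMat_isHermitian (π : Equiv.Perm (Fin n)) {X : Mat d n} (hX : X.IsHermitian) :
    (permuteMat π X).IsHermitian := by
  rw [permuteMat_eq_submatrix]
  exact hX.submatrix _

lemma traceNorm_permuteMat (π : Equiv.Perm (Fin n)) (X : Mat d n) :
    traceNorm (permuteMat π X) = traceNorm X := by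
  rw [permuteMat_eq_submatrix]
  exact traceNorm_submatrix X (permEquiv π)

lemma permuteMat_sum {m : ℕ} (π : Equiv.Perm (Fin n)) (Y : Fin m → Mat d n) :
    permuteMat π (∑ j, Y j) = ∑ j, permuteMat π (Y j) := by
  funext a b
  show (∑ j, Y j) (a ∘ π) (b ∘ π) = (∑ j, permuteMat π (Y j)) a b
  rw [Matrix.sum_apply, Matrix.sum_apply]
  exact Finset.sum_congr rfl fun j _ => rfl

lemma permuteMat_symm (π : Equiv.Perm (Fin n)) (X : Mat d n) :
    permuteMat π.symm (permuteMat π X) = X := by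
  funext a b
  show X ((a ∘ π.symm) ∘ π) ((b ∘ π.symm) ∘ π) = X a b
  congr 1 <;> · funext k; simp

lemma ptrace_permuteMat_eq_zero (π : Equiv.Perm (Fin n)) (j : Fin n) {Z : Mat d n}
    (h : ptrace (π.symm j) Z = 0) : ptrace j (permuteMat π Z) = 0 := by
  funext a b
  show ∑ s, permuteMat π Z (ins j a s) (ins j b s) = 0
  have hkey : ∀ (c : {k : Fin n // k ≠ j} → Fin d) (s : Fin d),
      (ins j c s) ∘ π = ins (π.symm j)
        (fun k => c ⟨π k.1, fun e => k.2 ((Equiv.eq_symm_apply π).mpr e)⟩) s := by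
    intro c s
    funext k
    show ins j c s (π k) = _
    rcases eq_or_ne k (π.symm j) with rfl | hk
    · rw [Equiv.apply_symm_apply, ins_apply_self, ins_apply_self]
    · have hπk : π k ≠ j := fun e => hk (by rw [← e, Equiv.symm_apply_apply])
      rw [ins_apply_ne _ _ _ hπk, ins_apply_ne _ _ _ hk]
  have hterm : ∀ s : Fin d, permuteMat π Z (ins j a s) (ins j b s)
      = Z (ins (π.symm j)
            (fun k => a ⟨π k.1, fun e => k.2 ((Equiv.eq_symm_apply π).mpr e)⟩) s)
          (ins (π.symm j)
            (fun k => b ⟨π k.1, fun e => k.2 ((Equiv.eq_symm_apply π).mpr e)⟩) s) := by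
    intro s
    show Z ((ins j a s) ∘ π) ((ins j b s) ∘ π) = _
    rw [hkey a s, hkey b s]
  rw [Finset.sum_congr rfl fun s _ => hterm s]
  exact congrFun (congrFun h _) _

lemma W1Set_perm_subset (π : Equiv.Perm (Fin n)) (X : Mat d n) :
    W1Set X ⊆ W1Set (permuteMat π X) := by
  rintro r ⟨Y, hH, hP, hS, rfl⟩
  refine ⟨fun j => permuteMat π (Y (π.symm j)), fun j => permuteMat_isHermitian π (hH _),
    fun j => ptrace_permuteMat_eq_zero π j (hP _), ?_, ?_⟩
  · rw [hS, permuteMat_sum]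
    exact (Equiv.sum_comp π.symm fun i => permuteMat π (Y i)).symm
  · have hsum : ∑ j, traceNorm (permuteMat π (Y (π.symm j))) = ∑ i, traceNorm (Y i) := by
      rw [Finset.sum_congr rfl fun j _ => traceNorm_permuteMat π (Y (π.symm j))]
      exact Equiv.sum_comp π.symm fun i => traceNorm (Y i)
    rw [hsum]

lemma W1_permuteMat (π : Equiv.Perm (Fin n)) (X : Mat d n) :
    W1 (permuteMat π X) = W1 X := by
  have h1 := W1Set_perm_subset π X
  have h2 := W1Set_perm_subset π.symm (permuteMat π X)
  rw [permuteMat_symm π X] at h2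
  rw [W1, W1]
  exact congrArg sInf (Set.Subset.antisymm h2 h1)

end Perm

/-! ### Channels -/

section Channel
variable {d n : ℕ}

lemma W1Set_nonneg {X : Mat d n} {r : ℝ} (hr : r ∈ W1Set X) : 0 ≤ r := by
  obtain ⟨Y, -, -, -, rfl⟩ := hr
  have h : 0 ≤ ∑ i, traceNorm (Y i) := Finset.sum_nonneg fun i _ => traceNorm_nonneg _
  linarith

lemma W1Set_bddBelow (X : Mat d n) : BddBelow (W1Set X) := ⟨0, fun r hr => W1Set_nonneg hr⟩

lemma W1_applyAt_le (hd : 0 < d) (i : Fin n)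
    (φ : Matrix (Fin d) (Fin d) ℂ →ₗ[ℂ] Matrix (Fin d) (Fin d) ℂ) (hφ : IsCPTP φ)
    {X : Mat d n} (hX : X.IsHermitian) (hXtr : X.trace = 0) :
    W1 (applyAt i (fun M => φ M) X) ≤ W1 X := by
  rw [W1, W1]
  apply le_csInf (W1Set_nonempty hd hX hXtr)
  rintro r ⟨Y, hH, hP, hS, rfl⟩
  have hmem : (1/2 : ℝ) * ∑ i', traceNorm (applyAt i (fun M => φ M) (Y i'))
      ∈ W1Set (applyAt i (fun M => φ M) X) := by
    refine ⟨fun i' => applyAt i (fun M => φ M) (Y i'),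
      fun i' => applyAt_isHermitian i φ hφ (hH i'), fun i' => ?_, ?_, rfl⟩
    · rcases eq_or_ne i i' with rfl | hne
      · rw [ptrace_applyAt_same i _ hφ.2, hP i]
      · exact ptrace_applyAt_ne hne φ (Y i') (hP i')
    · rw [hS, applyAt_sum]
  refine le_trans (csInf_le (W1Set_bddBelow _) hmem) ?_
  have hsum : ∑ i', traceNorm (applyAt i (fun M => φ M) (Y i')) ≤ ∑ i', traceNorm (Y i') :=
    Finset.sum_le_sum fun i' _ => traceNorm_applyAt_le i φ hφ (hH i')
  linarith

/-- Conjugation by `star U`. -/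
def conjMap (U : Matrix (Fin d) (Fin d) ℂ) :
    Matrix (Fin d) (Fin d) ℂ →ₗ[ℂ] Matrix (Fin d) (Fin d) ℂ where
  toFun M := star U * M * U
  map_add' M N := by
    show star U * (M + N) * U = star U * M * U + star U * N * U
    rw [Matrix.mul_add, Matrix.add_mul]
  map_smul' c M := by
    show star U * (c • M) * U = c • (star U * M * U)
    rw [Matrix.mul_smul, Matrix.smul_mul]

lemma extendMap_conj {A R : Type} [Fintype A] [Fintype R] [DecidableEq A] [DecidableEq R]
    (C D : Matrix A A ℂ) (M : Matrix (A × R) (A × R) ℂ) :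
    extendMap (fun N => C * N * D) M
      = (Matrix.of fun p q : A × R => C p.1 q.1 * (if p.2 = q.2 then (1:ℂ) else 0)) * M *
        (Matrix.of fun p q : A × R => D p.1 q.1 * (if p.2 = q.2 then (1:ℂ) else 0)) := by
  funext p q
  show ((C * (Matrix.of fun a a' => M (a, p.2) (a', q.2))) * D) p.1 q.1 = _
  rw [Matrix.mul_apply, Matrix.mul_apply]
  simp only [Matrix.mul_apply, Matrix.of_apply, Fintype.sum_prod_type, ite_mul, mul_ite,
    mul_zero, zero_mul, mul_one, one_mul, Finset.sum_ite_eq, Finset.sum_ite_eq',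
    Finset.mem_univ, if_true]

lemma conjMap_isCPTP {U : Matrix (Fin d) (Fin d) ℂ}
    (hU : U ∈ Matrix.unitaryGroup (Fin d) ℂ) : IsCPTP (conjMap U) := by
  have hU1 : star U * U = 1 := Matrix.mem_unitaryGroup_iff'.mp hU
  have hU2 : U * star U = 1 := Matrix.mem_unitaryGroup_iff.mp hU
  constructor
  · intro k M hM
    have hrw : (fun N => conjMap U N) = fun N => star U * N * U := rfl
    rw [hrw, extendMap_conj]
    have hVW : (Matrix.of fun p q : Fin d × Fin k => U p.1 q.1 * (if p.2 = q.2 then (1:ℂ) else 0))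
        = (Matrix.of fun p q : Fin d × Fin k =>
            (star U) p.1 q.1 * (if p.2 = q.2 then (1:ℂ) else 0)).conjTranspose := by
      funext p q
      rw [Matrix.conjTranspose_apply, Matrix.of_apply, Matrix.of_apply, star_mul']
      congr 1
      · rw [Matrix.star_eq_conjTranspose, Matrix.conjTranspose_apply, star_star]
      · rw [apply_ite star, star_one, star_zero]
        exact if_congr eq_comm rfl rfl
    rw [hVW]
    exact hM.mul_mul_conjTranspose_same _
  · intro M
    show (star U * M * U).trace = M.trace
    rw [Matrix.trace_mul_cycle, hU2, Matrix.one_mul]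

end Channel
theorem stmt0 {d n : ℕ} (hd : 2 ≤ d) (hn : 1 ≤ n) (i : Fin n)
    (φ : Matrix (Fin d) (Fin d) ℂ →ₗ[ℂ] Matrix (Fin d) (Fin d) ℂ) (hφ : IsCPTP φ)
    (X : Mat d n) (hX : X.IsHermitian) (hXtr : X.trace = 0) :
    W1 (applyAt i (fun M => φ M) X) ≤ W1 X ∧
    ((∃ U : Matrix (Fin d) (Fin d) ℂ, U ∈ Matrix.unitaryGroup (Fin d) ℂ ∧
        ∀ M, φ M = U * M * star U) → W1 (applyAt i (fun M => φ M) X) = W1 X) ∧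
    ∀ π : Equiv.Perm (Fin n), W1 (permuteMat π X) = W1 X := by
  have hd0 : 0 < d := by omega
  refine ⟨W1_applyAt_le hd0 i φ hφ hX hXtr, ?_, fun π => W1_permuteMat π X⟩
  rintro ⟨U, hUmem, hfU⟩
  have hU1 : star U * U = 1 := Matrix.mem_unitaryGroup_iff'.mp hUmem
  have hψ : IsCPTP (conjMap U) := conjMap_isCPTP hUmem
  have hXher' : (applyAt i (fun M => φ M) X).IsHermitian := applyAt_isHermitian i φ hφ hX
  have hXtr' : (applyAt i (fun M => φ M) X).trace = 0 := by
    rw [trace_applyAt i _ hφ.2, hXtr]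
  have hcomp : applyAt i (fun M => conjMap U M) (applyAt i (fun M => φ M) X) = X := by
    rw [applyAt_applyAt]
    have hfun : (fun M : Matrix (Fin d) (Fin d) ℂ => conjMap U (φ M)) = fun M => M := by
      funext M
      show star U * (φ M) * U = M
      rw [hfU M]
      have hassoc : star U * (U * M * star U) * U = (star U * U) * M * (star U * U) := by
        simp only [Matrix.mul_assoc]
      rw [hassoc, hU1, Matrix.one_mul, Matrix.mul_one]
    rw [hfun, applyAt_id]
  refine le_antisymm (W1_applyAt_le hd0 i φ hφ hX hXtr) ?_
  have h2 := W1_applyAt_le hd0 i (conjMap U) hψ hXher' hXtr'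
  rwa [hcomp] at h2
end QW1
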